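/- There is no irreducible plane quintic with singular locus consisting exactly of four cusps (A_2) and one A_4 singularity, and no irreducible plane quintic with exactly five cusps and one node (A_1). -/
import Mathlib


/-- There is no irreducible plane quintic with singular locus consisting exactly
of four cusps (`A_2`: μ=2, m=2) together with one `A_4` (μ=4, m=2), and none
with exactly five cusps and one node (`A_1`: μ=1, m=2).  Formalized relative to
an abstract duality theory of irreducible plane curves: the class formula
`deg C* = d(d-1) - Σ (μ+m-1)`, biduality `C** = C`, irreducibility of the dual,
and the classical fact that the dual of an irreducible cubic has degree 3, 4 or
6 (a smooth cubic dualizes to a 9-cuspidal sextic, a nodal cubic to a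
3-cuspidal quartic, a cuspidal cubic to a cuspidal cubic). -/
theorem no_quintic_4A2_A4_nor_5A2_A1 {Curve Point : Type*}
    (degree : Curve → ℕ) (dual : Curve → Curve) (Irred : Curve → Prop)
    (Sing : Curve → Finset Point) (μ m : Curve → Point → ℕ)
    (classFormula : ∀ C, Irred C →
      degree (dual C) = degree C * (degree C - 1)
        - ∑ P ∈ Sing C, (μ C P + m C P - 1))
    (bidual : ∀ C, Irred C → dual (dual C) = C)
    (dualIrred : ∀ C, Irred C → Irred (dual C))
    (cubicDual : ∀ C, Irred C → degree C = 3 →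
      degree (dual C) ∈ ({3, 4, 6} : Set ℕ)) :
    ¬ ∃ C, Irred C ∧ degree C = 5 ∧
      (((Sing C).card = 5 ∧ ∃ Q ∈ Sing C, μ C Q = 4 ∧ m C Q = 2 ∧
          ∀ P ∈ Sing C, P ≠ Q → μ C P = 2 ∧ m C P = 2) ∨
       ((Sing C).card = 6 ∧ ∃ Q ∈ Sing C, μ C Q = 1 ∧ m C Q = 2 ∧
          ∀ P ∈ Sing C, P ≠ Q → μ C P = 2 ∧ m C P = 2)) := by
  classical
  rintro ⟨C, hI, hdeg, hcase⟩
  -- In both cases the sum of (μ+m-1) over Sing C equals 17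
  have hsum : ∑ P ∈ Sing C, (μ C P + m C P - 1) = 17 := by
    rcases hcase with ⟨hcard, Q, hQ, hμQ, hmQ, hrest⟩ | ⟨hcard, Q, hQ, hμQ, hmQ, hrest⟩ <;>
    · rw [← Finset.add_sum_erase _ _ hQ, hμQ, hmQ]
      rw [Finset.sum_congr rfl (fun P hP => by
        obtain ⟨h1, h2⟩ := hrest P (Finset.mem_of_mem_erase hP)
          (Finset.ne_of_mem_erase hP)
        rw [h1, h2])]
      rw [Finset.sum_const, Finset.card_erase_of_mem hQ, hcard]; rfl
  have h3 : degree (dual C) = 3 := by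
    rw [classFormula C hI, hsum, hdeg]
  have := cubicDual (dual C) (dualIrred C hI) h3
  rw [bidual C hI, hdeg] at this
  simp at this
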